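/- Decision criterion for Postulate PI: if the action theory ⟨S, E_a, X_a, I_a⟩ with dependence relation ⇝ satisfies Postulate PS, then it satisfies Postulate PI if and only if the set IMPI_a of implicit inexecutability laws computed from ⟨S, E_a, I_a⟩ and ⇝ is empty (i.e., every candidate (⋀antecedents(Ê) ∧ ¬χ) → [a]⊥ with S-consistent antecedent, χ ∈ NewCons(S, ⋀consequents(Ê)) and all literals of χ independent of a, is already a K-consequence of S ∪ I_a). -/
import Mathlib


/-! Classical propositional formulas. -/
inductive PForm (α : Type) : Type
  | atom : α → PForm α
  | fls  : PForm α
  | not  : PForm α → PForm α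
  | and  : PForm α → PForm α → PForm α
  | or   : PForm α → PForm α → PForm α
  | imp  : PForm α → PForm α → PForm α

def PForm.Sat {α : Type} (v : α → Prop) : PForm α → Prop
  | atom p => v p
  | fls => False
  | not φ => ¬ Sat v φ
  | and φ ψ => Sat v φ ∧ Sat v ψ
  | or φ ψ => Sat v φ ∨ Sat v ψ
  | imp φ ψ => Sat v φ → Sat v ψ

/-- Classical (propositional) global consequence. -/
def EntailsCl {α : Type} (Γ : Set (PForm α)) (φ : PForm α) : Prop :=
  ∀ v : α → Prop, (∀ ψ ∈ Γ, PForm.Sat v ψ) → PForm.Sat v φ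

/-- Multimodal formulas with one box per action. -/
inductive MForm (Act α : Type) : Type
  | atom : α → MForm Act α
  | fls  : MForm Act α
  | not  : MForm Act α → MForm Act α
  | and  : MForm Act α → MForm Act α → MForm Act α
  | or   : MForm Act α → MForm Act α → MForm Act α
  | imp  : MForm Act α → MForm Act α → MForm Act α
  | box  : Act → MForm Act α → MForm Act α

def PForm.toM {Act α : Type} : PForm α → MForm Act α
  | .atom p => .atom p
  | .fls => .fls
  | .not φ => .not φ.toM
  | .and φ ψ => .and φ.toM ψ.toM
  | .or φ ψ => .or φ.toM ψ.toM
  | .imp φ ψ => .imp φ.toM ψ.toM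

/-- A Kripke model for multimodal K. -/
structure KModel (Act α : Type) where
  W : Type
  R : Act → W → W → Prop
  V : W → α → Prop

def MForm.Sat {Act α : Type} (M : KModel Act α) : M.W → MForm Act α → Prop
  | w, atom p => M.V w p
  | _, fls => False
  | w, not φ => ¬ Sat M w φ
  | w, and φ ψ => Sat M w φ ∧ Sat M w ψ
  | w, or φ ψ => Sat M w φ ∨ Sat M w ψ
  | w, imp φ ψ => Sat M w φ → Sat M w ψ
  | w, box a φ => ∀ w', M.R a w w' → Sat M w' φ

/-- Global truth in a model. -/
def Glob {Act α : Type} (M : KModel Act α) (Φ : MForm Act α) : Prop :=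
  ∀ w : M.W, MForm.Sat M w Φ

/-- Global consequence in multimodal K. -/
def ConsK {Act α : Type} (Γ : Set (MForm Act α)) (Φ : MForm Act α) : Prop :=
  ∀ M : KModel Act α, (∀ Ψ ∈ Γ, Glob M Ψ) → Glob M Φ

/-- Literals. -/
abbrev Lit (α : Type) := α × Bool

def Lit.Sat {α : Type} (v : α → Prop) (l : Lit α) : Prop :=
  if l.2 then v l.1 else ¬ v l.1

/-- A dependence relation `⇝ ⊆ Act × Lit`. -/
abbrev Dep (Act α : Type) := Act → Lit α → Prop

/-- `⇝`-models: along `R a`, literals independent of `a` persist. -/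
def IsDepModel {Act α : Type} (dep : Dep Act α) (M : KModel Act α) : Prop :=
  ∀ (a : Act) (w w' : M.W), M.R a w w' → ∀ p : α,
    (¬ dep a (p, true) → ¬ M.V w p → ¬ M.V w' p) ∧
    (¬ dep a (p, false) → M.V w p → M.V w' p)

/-- Dependence-based global consequence. -/
def ConsDep {Act α : Type} (dep : Dep Act α) (Γ : Set (MForm Act α)) (Φ : MForm Act α) : Prop :=
  ∀ M : KModel Act α, IsDepModel dep M → (∀ Ψ ∈ Γ, Glob M Ψ) → Glob M Φ

/-- An action theory: static laws `S`, effect laws `E` (antecedent/consequent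
pairs), executability laws `X` (antecedents), inexecutability laws `I`
(antecedents). -/
structure ActionTheory (Act α : Type) where
  S : Set (PForm α)
  E : Act → Set (PForm α × PForm α)
  X : Act → Set (PForm α)
  I : Act → Set (PForm α)

/-- `⟨a⟩Φ`. -/
def MForm.diam {Act α : Type} (a : Act) (Φ : MForm Act α) : MForm Act α :=
  .not (.box a (.not Φ))

/-- Effect law `A → [a]C`. -/
def effLaw {Act α : Type} (a : Act) (e : PForm α × PForm α) : MForm Act α :=
  .imp e.1.toM (.box a e.2.toM)

/-- Executability law `A → ⟨a⟩⊤`. -/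
def exeLaw {Act α : Type} (a : Act) (A : PForm α) : MForm Act α :=
  .imp A.toM (MForm.diam a (.not .fls))

/-- Inexecutability law `A → [a]⊥`. -/
def inexLaw {Act α : Type} (a : Act) (A : PForm α) : MForm Act α :=
  .imp A.toM (.box a .fls)

variable {Act α : Type}

def staticForms (T : ActionTheory Act α) : Set (MForm Act α) := PForm.toM '' T.S
def effForms (T : ActionTheory Act α) (a : Act) : Set (MForm Act α) := effLaw a '' T.E a
def exeForms (T : ActionTheory Act α) (a : Act) : Set (MForm Act α) := exeLaw a '' T.X a
def inexForms (T : ActionTheory Act α) (a : Act) : Set (MForm Act α) := inexLaw a '' T.I a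

/-- The action theory of the single action `a`:  `S ∪ E_a ∪ X_a ∪ I_a`. -/
def formsFor (T : ActionTheory Act α) (a : Act) : Set (MForm Act α) :=
  staticForms T ∪ effForms T a ∪ exeForms T a ∪ inexForms T a

/-- The whole action theory:  `S ∪ E ∪ X ∪ I`. -/
def allForms (T : ActionTheory Act α) : Set (MForm Act α) :=
  staticForms T ∪ (⋃ a, effForms T a) ∪ (⋃ a, exeForms T a) ∪ (⋃ a, inexForms T a)

/-- Postulate PS for action `a`: no implicit static laws. -/
def PS (T : ActionTheory Act α) (dep : Dep Act α) (a : Act) : Prop :=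
  ∀ φ : PForm α, ConsDep dep (formsFor T a) φ.toM → EntailsCl T.S φ

/-- Postulate PS*: no implicit static laws for the whole theory. -/
def PSstar (T : ActionTheory Act α) (dep : Dep Act α) : Prop :=
  ∀ φ : PForm α, ConsDep dep (allForms T) φ.toM → EntailsCl T.S φ

/-- Postulate PI for action `a`: no implicit inexecutability laws. -/
def PIpost (T : ActionTheory Act α) (dep : Dep Act α) (a : Act) : Prop :=
  ∀ A : PForm α, ConsDep dep (formsFor T a) (inexLaw a A) →
    ConsK (staticForms T ∪ inexForms T a) (inexLaw a A)

/-- Postulate PI*: no implicit inexecutability laws for the whole theory. -/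
def PIstar (T : ActionTheory Act α) (dep : Dep Act α) : Prop :=
  ∀ (a : Act) (A : PForm α), ConsDep dep (allForms T) (inexLaw a A) →
    ConsK (staticForms T ∪ ⋃ a', inexForms T a') (inexLaw a A)

/-! Clauses, prime implicates, new consequences. -/

abbrev Clause (α : Type) := Finset (Lit α)

def Clause.Sat {α : Type} (v : α → Prop) (c : Clause α) : Prop :=
  ∃ l ∈ c, Lit.Sat v l

def EntailsC {α : Type} (Γ : Set (PForm α)) (c : Clause α) : Prop :=
  ∀ v : α → Prop, (∀ φ ∈ Γ, PForm.Sat v φ) → Clause.Sat v c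

def ClEntails {α : Type} (c c' : Clause α) : Prop :=
  ∀ v : α → Prop, Clause.Sat v c → Clause.Sat v c'

/-- Prime implicates of (the conjunction of) `Γ`. -/
def PrimImp {α : Type} (Γ : Set (PForm α)) : Set (Clause α) :=
  {c | EntailsC Γ c ∧ ∀ c' : Clause α, EntailsC Γ c' → ClEntails c' c → ClEntails c c'}

/-- `NewCons(Γ, ψ) = PI(Γ ∧ ψ) \ PI(Γ)`. -/
def NewCons {α : Type} (Γ : Set (PForm α)) (ψ : PForm α) : Set (Clause α) :=
  PrimImp (Γ ∪ {ψ}) \ PrimImp Γ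

def Lit.toForm {α : Type} (l : Lit α) : PForm α :=
  if l.2 then .atom l.1 else .not (.atom l.1)

def Lit.neg {α : Type} (l : Lit α) : Lit α := (l.1, !l.2)

noncomputable def Clause.toForm {α : Type} (c : Clause α) : PForm α :=
  c.toList.foldr (fun l φ => (Lit.toForm l).or φ) .fls

/-- Conjunction of a list of formulas. -/
def conjList {α : Type} (L : List (PForm α)) : PForm α :=
  L.foldr .and (.not .fls)

/-- Frame axioms `¬l → [a]¬l` for literals `l` independent of `a`. -/
def FRA {Act α : Type} (dep : Dep Act α) (a : Act) : Set (MForm Act α) :=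
  { Φ | ∃ l : Lit α, ¬ dep a l ∧
        Φ = .imp ((Lit.neg l).toForm.toM) (.box a ((Lit.neg l).toForm.toM)) }

/-- The candidate implicit inexecutability laws
`(⋀antecedents(Ê) ∧ ¬χ) → [a]⊥` for `Ê ⊆ E_a`,
`χ ∈ NewCons(S, ⋀consequents(Ê))` with all literals of `χ` independent of `a`
and `S`-consistent antecedent. -/
def IMPI {Act α : Type} (T : ActionTheory Act α) (dep : Dep Act α) (a : Act) :
    Set (MForm Act α) :=
  { Φ | ∃ (L : List (PForm α × PForm α)) (χ : Clause α),
      (∀ e ∈ L, e ∈ T.E a) ∧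
      χ ∈ NewCons T.S (conjList (L.map Prod.snd)) ∧
      (∀ l ∈ χ, ¬ dep a l) ∧
      (∃ v : α → Prop, (∀ ψ ∈ T.S, PForm.Sat v ψ) ∧
        PForm.Sat v (conjList (L.map Prod.fst)) ∧ ¬ Clause.Sat v χ) ∧
      Φ = inexLaw a (.and (conjList (L.map Prod.fst)) (.not χ.toForm)) }

/-- Output of Algorithm 2: the candidate implicit inexecutability laws that
are not already K-consequences of `S ∪ I_a`. -/
def IMPIalg {Act α : Type} (T : ActionTheory Act α) (dep : Dep Act α) (a : Act) :
    Set (MForm Act α) :=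
  { Φ ∈ IMPI T dep a | ¬ ConsK (staticForms T ∪ inexForms T a) Φ }

section AuxBridge
variable {Act α : Type}

open Classical

lemma sat_toM (M : KModel Act α) (w : M.W) (φ : PForm α) :
    MForm.Sat M w (PForm.toM φ) ↔ PForm.Sat (M.V w) φ := by
  induction φ with
  | atom p => exact Iff.rfl
  | fls => exact Iff.rfl
  | not φ ih => simp [PForm.toM, MForm.Sat, PForm.Sat, ih]
  | and φ ψ ih1 ih2 => simp [PForm.toM, MForm.Sat, PForm.Sat, ih1, ih2]
  | or φ ψ ih1 ih2 => simp [PForm.toM, MForm.Sat, PForm.Sat, ih1, ih2]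
  | imp φ ψ ih1 ih2 => simp [PForm.toM, MForm.Sat, PForm.Sat, ih1, ih2]

lemma psat_ext {v v' : α → Prop} (h : ∀ p, v p ↔ v' p) (φ : PForm α) :
    PForm.Sat v φ ↔ PForm.Sat v' φ := by
  induction φ with
  | atom p => exact h p
  | fls => exact Iff.rfl
  | not φ ih => simp [PForm.Sat, ih]
  | and φ ψ ih1 ih2 => simp [PForm.Sat, ih1, ih2]
  | or φ ψ ih1 ih2 => simp [PForm.Sat, ih1, ih2]
  | imp φ ψ ih1 ih2 => simp [PForm.Sat, ih1, ih2]

lemma litsat_ext {v v' : α → Prop} (h : ∀ p, v p ↔ v' p) (l : Lit α) :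
    Lit.Sat v l ↔ Lit.Sat v' l := by
  rcases l with ⟨p, b⟩
  cases b <;> simp [Lit.Sat, h p]

lemma csat_ext {v v' : α → Prop} (h : ∀ p, v p ↔ v' p) (c : Clause α) :
    Clause.Sat v c ↔ Clause.Sat v' c := by
  unfold Clause.Sat
  exact exists_congr fun l => and_congr_right fun _ => litsat_ext h l

lemma csat_mono {v : α → Prop} {c c' : Clause α} (h : c ⊆ c') :
    Clause.Sat v c → Clause.Sat v c' := by
  rintro ⟨l, hl, hs⟩; exact ⟨l, h hl, hs⟩

lemma conjList_sat {v : α → Prop} (L : List (PForm α)) :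
    PForm.Sat v (conjList L) ↔ ∀ φ ∈ L, PForm.Sat v φ := by
  induction L with
  | nil => simp [conjList, PForm.Sat]
  | cons φ L ih => simp [conjList, PForm.Sat] at ih ⊢; tauto

lemma litToForm_sat {v : α → Prop} (l : Lit α) :
    PForm.Sat v (Lit.toForm l) ↔ Lit.Sat v l := by
  rcases l with ⟨p, b⟩
  cases b <;> simp [Lit.toForm, Lit.Sat, PForm.Sat]

lemma clauseToForm_sat {v : α → Prop} (c : Clause α) :
    PForm.Sat v (Clause.toForm c) ↔ Clause.Sat v c := by
  unfold Clause.toForm Clause.Sat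
  have : ∀ L : List (Lit α),
      PForm.Sat v (L.foldr (fun l φ => (Lit.toForm l).or φ) .fls) ↔ ∃ l ∈ L, Lit.Sat v l := by
    intro L
    induction L with
    | nil => simp [PForm.Sat]
    | cons l L ih => simp [PForm.Sat, ih, litToForm_sat]
  rw [this]
  simp

end AuxBridge
section AuxPrime
variable {α : Type}

open Classical

lemma exists_minimal_implicate (Γ : Set (PForm α)) :
    ∀ χ : Clause α, EntailsC Γ χ →
      ∃ χ' : Clause α, χ' ⊆ χ ∧ EntailsC Γ χ' ∧ ∀ c ⊆ χ', EntailsC Γ c → c = χ' := by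
  intro χ
  induction χ using Finset.strongInduction with
  | _ χ ih =>
    intro h
    by_cases hc : ∃ c ⊂ χ, EntailsC Γ c
    · obtain ⟨c, hsub, hce⟩ := hc
      obtain ⟨χ', h1, h2, h3⟩ := ih c hsub hce
      exact ⟨χ', h1.trans hsub.subset, h2, h3⟩
    · refine ⟨χ, subset_rfl, h, fun c hsub hce => ?_⟩
      by_contra hne
      exact hc ⟨c, ssubset_of_subset_of_ne hsub hne, hce⟩

lemma subset_of_clEntails {c c' : Clause α} (h : ClEntails c c')
    (hnt : ∃ v, ¬ Clause.Sat v c') : c ⊆ c' := by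
  intro l hl
  rcases l with ⟨p, b⟩
  by_contra hl'
  obtain ⟨v, hv⟩ := hnt
  have hd : DecidableEq α := Classical.decEq α
  set v' : α → Prop := fun q => if q = p then (b = true) else v q with hv'
  have hsatc : Clause.Sat v' c := by
    refine ⟨(p, b), hl, ?_⟩
    cases b <;> simp [Lit.Sat, hv']
  obtain ⟨⟨q, c₂⟩, hm, hms⟩ := h v' hsatc
  apply hv
  refine ⟨(q, c₂), hm, ?_⟩
  by_cases hq : q = p
  · subst hq
    have hne : c₂ ≠ b := fun he => hl' (he ▸ hm)
    exfalso
    cases b <;> cases c₂ <;> simp_all [Lit.Sat, hv']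
  · have hvq : v' q = v q := if_neg hq
    cases c₂ <;> simp_all [Lit.Sat, hvq]

lemma exists_prime_subset (Γ : Set (PForm α)) (χ : Clause α)
    (hχ : EntailsC Γ χ) (hnt : ∃ v, ¬ Clause.Sat v χ) :
    ∃ χ' : Clause α, χ' ⊆ χ ∧ χ' ∈ PrimImp Γ := by
  obtain ⟨χ', hsub, hent, hmin⟩ := exists_minimal_implicate Γ χ hχ
  obtain ⟨v, hv⟩ := hnt
  have hnt' : ∃ v, ¬ Clause.Sat v χ' := ⟨v, fun hs => hv (csat_mono hsub hs)⟩
  refine ⟨χ', hsub, hent, fun c' hc' hce => ?_⟩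
  have hsub' : c' ⊆ χ' := subset_of_clEntails hce hnt'
  have := hmin c' hsub' hc'
  subst this
  exact fun v h => h

end AuxPrime
section AuxMain
variable {Act α : Type}

open Classical

lemma sat_diam_top (M : KModel Act α) (w : M.W) (a : Act) :
    MForm.Sat M w (MForm.diam a (.not .fls)) ↔ ∃ w', M.R a w w' := by
  simp only [MForm.diam, MForm.Sat]
  constructor
  · intro h
    by_contra hn
    push_neg at hn
    exact h fun w' hr => absurd hr (hn w')
  · rintro ⟨w', hr⟩ h
    exact h w' hr id

/-- Soundness: candidate implicit inexecutability laws are dep-consequences. -/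
lemma sound_candidate (T : ActionTheory Act α) (dep : Dep Act α) (a : Act)
    (L : List (PForm α × PForm α)) (χ : Clause α)
    (hL : ∀ e ∈ L, e ∈ T.E a)
    (hent : EntailsC (T.S ∪ {conjList (L.map Prod.snd)}) χ)
    (hind : ∀ l ∈ χ, ¬ dep a l) :
    ConsDep dep (formsFor T a)
      (inexLaw a (.and (conjList (L.map Prod.fst)) (.not χ.toForm))) := by
  intro M hdep hglob w
  intro hante w' hr
  simp only [PForm.toM, MForm.Sat, sat_toM] at hante
  obtain ⟨hfst, hnchi⟩ := hante
  rw [clauseToForm_sat] at hnchi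
  -- the successor world satisfies S
  have hS' : ∀ φ ∈ T.S, PForm.Sat (M.V w') φ := by
    intro φ hφ
    have := hglob (PForm.toM φ) (Or.inl (Or.inl (Or.inl ⟨φ, hφ, rfl⟩))) w'
    rwa [sat_toM] at this
  -- the successor world satisfies the consequents
  have hC' : PForm.Sat (M.V w') (conjList (L.map Prod.snd)) := by
    rw [conjList_sat]
    intro ψ hψ
    obtain ⟨e, heL, rfl⟩ := List.mem_map.mp hψ
    have hef := hglob (effLaw a e) (Or.inl (Or.inl (Or.inr ⟨e, hL e heL, rfl⟩))) w
    simp only [effLaw, MForm.Sat] at hef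
    have h1 : MForm.Sat M w (PForm.toM e.1) := by
      rw [sat_toM]
      exact (conjList_sat _).mp hfst e.1 (List.mem_map.mpr ⟨e, heL, rfl⟩)
    have := hef h1 w' hr
    rwa [sat_toM] at this
  -- hence it satisfies χ
  have hchi' : Clause.Sat (M.V w') χ := by
    apply hent
    intro φ hφ
    rcases hφ with hφ | hφ
    · exact hS' φ hφ
    · rw [Set.mem_singleton_iff] at hφ; subst hφ; exact hC'
  -- but independent literals persist, so χ is false at w' : contradiction
  obtain ⟨⟨p, b⟩, hlχ, hls⟩ := hchi'
  have hfw : ¬ Lit.Sat (M.V w) (p, b) := fun hs => hnchi ⟨(p, b), hlχ, hs⟩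
  have hpers := hdep a w w' hr p
  have hnd := hind (p, b) hlχ
  cases b with
  | true =>
    simp only [Lit.Sat, if_pos rfl] at hls hfw
    exact (hpers.1 hnd hfw) hls
  | false =>
    simp only [Lit.Sat] at hls hfw
    simp only [if_neg (by simp : ¬ (false = true))] at hls hfw
    exact hls (hpers.2 hnd (not_not.mp hfw))

/-- If a world satisfying `S` has no "legal successor" valuation, then there
is a candidate implicit inexecutability law whose antecedent it satisfies. -/
lemma candidate_of_no_successor [Fintype α]
    (T : ActionTheory Act α) (dep : Dep Act α) (a : Act) (u : α → Prop)
    (huS : ∀ φ ∈ T.S, PForm.Sat u φ)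
    (hno : ¬ ∃ u' : α → Prop, (∀ φ ∈ T.S, PForm.Sat u' φ) ∧
        (∀ e ∈ T.E a, PForm.Sat u e.1 → PForm.Sat u' e.2) ∧
        (∀ l : Lit α, ¬ dep a l → ¬ Lit.Sat u l → ¬ Lit.Sat u' l)) :
    ∃ (L : List (PForm α × PForm α)) (χ : Clause α),
      (∀ e ∈ L, e ∈ T.E a) ∧
      χ ∈ NewCons T.S (conjList (L.map Prod.snd)) ∧
      (∀ l ∈ χ, ¬ dep a l) ∧
      PForm.Sat u (conjList (L.map Prod.fst)) ∧ ¬ Clause.Sat u χ := by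
  classical
  -- the clause of all independent literals false at `u`
  set χ0 : Clause α := Finset.univ.filter (fun l => ¬ dep a l ∧ ¬ Lit.Sat u l) with hχ0
  have hmemχ0 : ∀ l : Lit α, l ∈ χ0 ↔ (¬ dep a l ∧ ¬ Lit.Sat u l) := by
    intro l; simp [hχ0]
  have hnsatχ0 : ¬ Clause.Sat u χ0 := by
    rintro ⟨l, hl, hs⟩
    exact ((hmemχ0 l).mp hl).2 hs
  -- condition on boolean valuations
  set cond : (α → Bool) → Prop := fun b =>
    (∀ φ ∈ T.S, PForm.Sat (fun p => b p = true) φ) ∧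
      ¬ Clause.Sat (fun p => b p = true) χ0 with hcond
  have hch : ∀ b : α → Bool, ∃ e : PForm α × PForm α,
      cond b → (e ∈ T.E a ∧ PForm.Sat u e.1 ∧ ¬ PForm.Sat (fun p => b p = true) e.2) := by
    intro b
    by_cases hb : cond b
    · have hpers : ∀ l : Lit α, ¬ dep a l → ¬ Lit.Sat u l →
          ¬ Lit.Sat (fun p => b p = true) l := by
        intro l h1 h2 hs
        exact hb.2 ⟨l, (hmemχ0 l).mpr ⟨h1, h2⟩, hs⟩
      have : ¬ ∀ e ∈ T.E a, PForm.Sat u e.1 → PForm.Sat (fun p => b p = true) e.2 := by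
        intro hall
        exact hno ⟨_, hb.1, hall, hpers⟩
      push_neg at this
      obtain ⟨e, he1, he2, he3⟩ := this
      exact ⟨e, fun _ => ⟨he1, he2, he3⟩⟩
    · exact ⟨(.fls, .fls), fun h => absurd h hb⟩
  choose g hg using hch
  set L : List (PForm α × PForm α) :=
    (Finset.univ : Finset (α → Bool)).toList.filterMap
      (fun b => if cond b then some (g b) else none) with hLdef
  have hmemL : ∀ e, e ∈ L ↔ ∃ b, cond b ∧ g b = e := by
    intro e
    simp only [hLdef, List.mem_filterMap, Finset.mem_toList, Finset.mem_univ, true_and]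
    constructor
    · rintro ⟨b, hb⟩
      by_cases hc : cond b
      · rw [if_pos hc] at hb
        exact ⟨b, hc, Option.some.inj hb⟩
      · rw [if_neg hc] at hb; cases hb
    · rintro ⟨b, hc, rfl⟩
      exact ⟨b, by rw [if_pos hc]⟩
  have hLE : ∀ e ∈ L, e ∈ T.E a ∧ PForm.Sat u e.1 := by
    intro e he
    obtain ⟨b, hc, rfl⟩ := (hmemL e).mp he
    exact ⟨(hg b hc).1, (hg b hc).2.1⟩
  -- χ0 is an implicate of S ∪ {conjunction of consequents of L}
  have hent : EntailsC (T.S ∪ {conjList (L.map Prod.snd)}) χ0 := by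
    intro v' hv'
    by_contra hns
    set b : α → Bool := fun p => decide (v' p) with hb
    have hiff : ∀ p, v' p ↔ (b p = true) := by
      intro p; simp [hb]
    have hcb : cond b := by
      constructor
      · intro φ hφ
        exact (psat_ext hiff φ).mp (hv' φ (Or.inl hφ))
      · intro hs
        exact hns ((csat_ext hiff χ0).mpr hs)
    have heL : g b ∈ L := (hmemL (g b)).mpr ⟨b, hcb, rfl⟩
    have hsnd : PForm.Sat v' (g b).2 := by
      have hconj := hv' (conjList (L.map Prod.snd)) (Or.inr rfl)
      exact (conjList_sat _).mp hconj (g b).2 (List.mem_map.mpr ⟨g b, heL, rfl⟩)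
    exact (hg b hcb).2.2 ((psat_ext hiff (g b).2).mp hsnd)
  -- extract a prime implicate
  obtain ⟨χ', hsub, hprime⟩ := exists_prime_subset _ χ0 hent ⟨u, hnsatχ0⟩
  have hnsatχ' : ¬ Clause.Sat u χ' := fun hs => hnsatχ0 (csat_mono hsub hs)
  refine ⟨L, χ', fun e he => (hLE e he).1, ⟨hprime, ?_⟩, ?_, ?_, hnsatχ'⟩
  · -- χ' is not a prime implicate of S alone (not even an implicate)
    intro hpr
    exact hnsatχ' (hpr.1 u huS)
  · intro l hl
    exact ((hmemχ0 l).mp (hsub hl)).1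
  · rw [conjList_sat]
    intro φ hφ
    obtain ⟨e, heL, rfl⟩ := List.mem_map.mp hφ
    exact (hLE e heL).2

end AuxMain
/-- Theorem 7: if the theory for `a` satisfies PS, then it
satisfies PI iff the computed set of implicit inexecutability laws is empty. -/
theorem stmt_18 [Fintype α] {Act : Type} (T : ActionTheory Act α) (dep : Dep Act α)
    (a : Act) (hPS : PS T dep a) :
    PIpost T dep a ↔ IMPIalg T dep a = ∅ := by
  classical
  constructor
  · -- PI implies the algorithm outputs nothing
    intro hPI
    rw [Set.eq_empty_iff_forall_notMem]
    rintro Φ ⟨hmem, hnK⟩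
    obtain ⟨L, χ, hL, hnew, hind, _, rfl⟩ := hmem
    exact hnK (hPI _ (sound_candidate T dep a L χ hL hnew.1.1 hind))
  · -- empty output implies PI
    intro hEmpty
    have hIMPIK : ∀ Φ ∈ IMPI T dep a, ConsK (staticForms T ∪ inexForms T a) Φ := by
      intro Φ hΦ
      by_contra h
      rw [Set.eq_empty_iff_forall_notMem] at hEmpty
      exact hEmpty Φ ⟨hΦ, h⟩
    intro A hA N hN w
    simp only [inexLaw, MForm.Sat]
    intro hw w' hr
    set v : α → Prop := N.V w with hv
    have hvS : ∀ φ ∈ T.S, PForm.Sat v φ := by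
      intro φ hφ
      have := hN (PForm.toM φ) (Or.inl ⟨φ, hφ, rfl⟩) w
      rwa [sat_toM] at this
    have hvA : PForm.Sat v A := (sat_toM N w A).mp hw
    have hvI : ∀ B ∈ T.I a, ¬ PForm.Sat v B := by
      intro B hB hsat
      have hIB := hN (inexLaw a B) (Or.inr ⟨B, hB, rfl⟩) w
      simp only [inexLaw, MForm.Sat] at hIB
      exact hIB ((sat_toM N w B).mpr hsat) w' hr
    -- the big canonical dependence model
    set M : KModel Act α :=
      { W := {u : α → Prop // ∀ φ ∈ T.S, PForm.Sat u φ}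
        R := fun a' u u' => a' = a ∧ (∀ B ∈ T.I a, ¬ PForm.Sat u.1 B) ∧
          (∀ e ∈ T.E a, PForm.Sat u.1 e.1 → PForm.Sat u'.1 e.2) ∧
          (∀ l : Lit α, ¬ dep a l → ¬ Lit.Sat u.1 l → ¬ Lit.Sat u'.1 l)
        V := fun u p => u.1 p } with hM
    have hMdep : IsDepModel dep M := by
      rintro a' u u' ⟨rfl, -, -, hpers⟩ p
      constructor
      · intro hnd hnp
        have := hpers (p, true) hnd
        simp only [Lit.Sat, if_pos rfl] at this
        exact this hnp
      · intro hnd hp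
        have := hpers (p, false) hnd
        simp only [Lit.Sat] at this
        simp only [if_neg (by simp : ¬ ((false : Bool) = true))] at this
        exact not_not.mp (this (not_not_intro hp))
    have hGlob : ∀ Ψ ∈ formsFor T a, Glob M Ψ := by
      rintro Ψ hΨ
      rcases hΨ with ((⟨φ, hφ, rfl⟩ | ⟨e, he, rfl⟩) | ⟨A', hA', rfl⟩) | ⟨B, hB, rfl⟩
      · intro u
        rw [sat_toM]
        exact u.2 φ hφ
      · intro u
        simp only [effLaw, MForm.Sat]
        intro h1 u' hr'
        rw [sat_toM]
        exact hr'.2.2.1 e he ((sat_toM M u e.1).mp h1)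
      · intro u
        intro h1
        rw [sat_diam_top]
        have huA' : PForm.Sat u.1 A' := (sat_toM M u A').mp h1
        -- no inexecutability antecedent holds at u (by PS)
        have hI : ∀ B ∈ T.I a, ¬ PForm.Sat u.1 B := by
          intro B hB hsat
          have hcons : ConsDep dep (formsFor T a) (PForm.toM (.not (.and B A'))) := by
            intro M' hdep' hglob' x
            rw [sat_toM]
            simp only [PForm.Sat]
            rintro ⟨hxB, hxA'⟩
            have hIB := hglob' (inexLaw a B) (Or.inr ⟨B, hB, rfl⟩) x
            simp only [inexLaw, MForm.Sat] at hIB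
            have hbox := hIB ((sat_toM M' x B).mpr hxB)
            have hexe := hglob' (exeLaw a A') (Or.inl (Or.inr ⟨A', hA', rfl⟩)) x
            have hdia := hexe ((sat_toM M' x A').mpr hxA')
            rw [sat_diam_top] at hdia
            obtain ⟨x', hx'⟩ := hdia
            exact hbox x' hx'
          have hcl := hPS _ hcons u.1 u.2
          simp only [PForm.Sat] at hcl
          exact hcl ⟨hsat, huA'⟩
        by_cases hsucc : ∃ u' : α → Prop, (∀ φ ∈ T.S, PForm.Sat u' φ) ∧
            (∀ e ∈ T.E a, PForm.Sat u.1 e.1 → PForm.Sat u' e.2) ∧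
            (∀ l : Lit α, ¬ dep a l → ¬ Lit.Sat u.1 l → ¬ Lit.Sat u' l)
        · obtain ⟨u', h1', h2', h3'⟩ := hsucc
          exact ⟨⟨u', h1'⟩, rfl, hI, h2', h3'⟩
        · exfalso
          obtain ⟨L, χ, hL, hnew, hind, hfst, hnchi⟩ :=
            candidate_of_no_successor T dep a u.1 u.2 hsucc
          have hsound := sound_candidate T dep a L χ hL hnew.1.1 hind
          have hclass : ConsDep dep (formsFor T a)
              (PForm.toM (.not (.and (.and (conjList (L.map Prod.fst)) (.not χ.toForm)) A'))) := by
            intro M' hdep' hglob' x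
            rw [sat_toM]
            simp only [PForm.Sat]
            rintro ⟨hante, hxA'⟩
            have hbox := hsound M' hdep' hglob' x
            simp only [inexLaw, MForm.Sat] at hbox
            have hbox' := hbox ((sat_toM M' x (.and (conjList (L.map Prod.fst)) (.not χ.toForm))).mpr hante)
            have hexe := hglob' (exeLaw a A') (Or.inl (Or.inr ⟨A', hA', rfl⟩)) x
            have hdia := hexe ((sat_toM M' x A').mpr hxA')
            rw [sat_diam_top] at hdia
            obtain ⟨x', hx'⟩ := hdia
            exact hbox' x' hx'
          have hcl := hPS _ hclass u.1 u.2
          simp only [PForm.Sat] at hcl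
          exact hcl ⟨⟨hfst, fun hsf => hnchi ((clauseToForm_sat χ).mp hsf)⟩, huA'⟩
      · intro u
        simp only [inexLaw, MForm.Sat]
        intro h1 u' hr'
        exact hr'.2.1 B hB ((sat_toM M u B).mp h1)
    -- apply the hypothesis to the big model
    have hGlobM := hA M hMdep hGlob
    have hbox := hGlobM ⟨v, hvS⟩
    have hbox' := hbox ((sat_toM M ⟨v, hvS⟩ A).mpr hvA)
    by_cases hsucc : ∃ u' : α → Prop, (∀ φ ∈ T.S, PForm.Sat u' φ) ∧
        (∀ e ∈ T.E a, PForm.Sat v e.1 → PForm.Sat u' e.2) ∧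
        (∀ l : Lit α, ¬ dep a l → ¬ Lit.Sat v l → ¬ Lit.Sat u' l)
    · obtain ⟨u', h1', h2', h3'⟩ := hsucc
      exact hbox' ⟨u', h1'⟩ ⟨rfl, hvI, h2', h3'⟩
    · obtain ⟨L, χ, hL, hnew, hind, hfst, hnchi⟩ :=
        candidate_of_no_successor T dep a v hvS hsucc
      have hK := hIMPIK _ ⟨L, χ, hL, hnew, hind, ⟨v, hvS, hfst, hnchi⟩, rfl⟩
      -- two-world countermodel refuting the candidate law
      set N2 : KModel Act α :=
        { W := Bool, R := fun _ x y => x = true ∧ y = false, V := fun _ p => v p } with hN2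
      have hN2glob : ∀ Ψ ∈ staticForms T ∪ inexForms T a, Glob N2 Ψ := by
        rintro Ψ (⟨φ, hφ, rfl⟩ | ⟨B, hB, rfl⟩)
        · intro x
          rw [sat_toM]
          exact hvS φ hφ
        · intro x
          simp only [inexLaw, MForm.Sat]
          intro hxB
          exact absurd ((sat_toM N2 x B).mp hxB) (hvI B hB)
      have hbox2 := hK N2 hN2glob true
      have hante2 : MForm.Sat N2 true
          (PForm.toM (.and (conjList (L.map Prod.fst)) (.not χ.toForm))) := by
        rw [sat_toM]
        exact ⟨hfst, fun hsf => hnchi ((clauseToForm_sat χ).mp hsf)⟩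
      exact hbox2 hante2 false ⟨rfl, rfl⟩
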